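/- Let i, j ≥ 1 with i + j ≤ n, let 1 ≤ k ≤ i−1 and 1 ≤ k' ≤ j−1. Then the following three maps are well-defined surjective homomorphisms of ℂ[S_{n−1}]-modules: φ_0 : R^{n−1}_{i,j} → R^n_{i,j}/⟨x_n, y_n⟩ sending the class of P to the class of P; φ_k : R^{n−1}_{i−1,j} → ⟨x_n^k, y_n⟩/⟨x_n^{k+1}, y_n⟩ (ideals in R^n_{i,j}) sending the class of P to the class of x_n^k P; and φ'_{k'} : R^{n−1}_{i,j−1} → ⟨y_n^{k'}⟩/⟨y_n^{k'+1}⟩ (ideals in R^n_{i,j}) sending the class of P to the class of y_n^{k'} P. Here P ranges over polynomials in x_1,…,x_{n−1},y_1,…,y_{n−1}, and S_{n−1} ≤ S_n permutes the first n−1 indices. -/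

import Mathlib

open MvPolynomial

set_option maxHeartbeats 1000000
set_option synthInstance.maxHeartbeats 400000

noncomputable section

/-- the ideal `(x₁y₁, …, xₙyₙ)`. -/
abbrev Bideal (n : ℕ) : Ideal (MvPolynomial (Fin n ⊕ Fin n) ℂ) :=
  Ideal.span (Set.range fun i : Fin n => X (Sum.inl i) * X (Sum.inr i))

/-- `B n = ℂ[x₁,…,xₙ,y₁,…,yₙ]/(x₁y₁,…,xₙyₙ)`, the `n`-th tensor power of `ℂ[x,y]/(xy)`.
The variable `x_i` is `X (Sum.inl i)` and `y_i` is `X (Sum.inr i)`. -/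
abbrev B (n : ℕ) : Type := MvPolynomial (Fin n ⊕ Fin n) ℂ ⧸ Bideal n

abbrev mkB (n : ℕ) : MvPolynomial (Fin n ⊕ Fin n) ℂ →ₐ[ℂ] B n :=
  Ideal.Quotient.mkₐ ℂ (Bideal n)

def xv (n : ℕ) (i : Fin n) : B n := mkB n (X (Sum.inl i))
def yv (n : ℕ) (i : Fin n) : B n := mkB n (X (Sum.inr i))

/-- the action of a permutation `σ ∈ Sₙ` on `B n`: `σ·xᵢ = x_{σ i}`, `σ·yᵢ = y_{σ i}`. -/
def permB (n : ℕ) (σ : Equiv.Perm (Fin n)) : B n →ₐ[ℂ] B n :=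
  Ideal.Quotient.liftₐ (Bideal n)
    ((mkB n).comp (MvPolynomial.rename (Sum.map ⇑σ ⇑σ)))
    (by
      intro a ha
      have h : Bideal n ≤ RingHom.ker ((mkB n).comp (MvPolynomial.rename (Sum.map ⇑σ ⇑σ))).toRingHom := by
        rw [Ideal.span_le]
        rintro _ ⟨i, rfl⟩
        simp only [SetLike.mem_coe, RingHom.mem_ker, AlgHom.toRingHom_eq_coe, RingHom.coe_coe,
          AlgHom.comp_apply, map_mul, rename_X, Sum.map_inl, Sum.map_inr]
        rw [← map_mul, Ideal.Quotient.mkₐ_eq_mk, Ideal.Quotient.eq_zero_iff_mem]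
        exact Ideal.subset_span ⟨σ i, rfl⟩
      exact h ha)

/-- evaluation at the origin. -/
def ev0 (n : ℕ) : B n →ₐ[ℂ] ℂ :=
  Ideal.Quotient.liftₐ (Bideal n) (aeval fun _ => (0 : ℂ))
    (by
      intro a ha
      have h : Bideal n ≤ RingHom.ker (aeval (R := ℂ) fun _ : Fin n ⊕ Fin n => (0 : ℂ)).toRingHom := by
        rw [Ideal.span_le]
        rintro _ ⟨i, rfl⟩
        simp [RingHom.mem_ker]
      exact h ha)

/-- `Jₙ`, the ideal of `B n` generated by the `Sₙ`-invariant elements vanishing at the origin. -/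
def Jn (n : ℕ) : Ideal (B n) :=
  Ideal.span {p : B n | (∀ σ : Equiv.Perm (Fin n), permB n σ p = p) ∧ ev0 n p = 0}

/-- the symmetric coinvariant algebra `Rₙ = Bₙ/Jₙ`. -/
abbrev Rn (n : ℕ) : Type := B n ⧸ Jn n

/-- the `k`-th elementary symmetric polynomial `e_k` in the `x` variables. -/
def eX (n k : ℕ) : B n :=
  ∑ S ∈ Finset.powersetCard k (Finset.univ : Finset (Fin n)), ∏ t ∈ S, xv n t

/-- the `k`-th elementary symmetric polynomial `f_k` in the `y` variables. -/
def fY (n k : ℕ) : B n :=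
  ∑ S ∈ Finset.powersetCard k (Finset.univ : Finset (Fin n)), ∏ t ∈ S, yv n t

/-- the generating set `S^n_{i,j}` of the ideal `I^n_{i,j}`:
`e₁,…,e_{i−1}`, all `x_I` with `|I| = i`, `f₁,…,f_{j−1}`, all `y_J` with `|J| = j`. -/
def Sij (n i j : ℕ) : Set (B n) :=
  {p | ∃ k, 1 ≤ k ∧ k < i ∧ p = eX n k} ∪
  {p | ∃ I : Finset (Fin n), I.card = i ∧ p = ∏ t ∈ I, xv n t} ∪
  {p | ∃ k, 1 ≤ k ∧ k < j ∧ p = fY n k} ∪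
  {p | ∃ J : Finset (Fin n), J.card = j ∧ p = ∏ t ∈ J, yv n t}

/-- the ideal `I^n_{i,j}`; `R^n_{i,j} = B n ⧸ Iij n i j`. -/
def Iij (n i j : ℕ) : Ideal (B n) := Ideal.span (Sij n i j)

/-- the subquotient `K / K'` of two ideals of `B n`, as a `ℂ`-module. -/
abbrev SQ (n : ℕ) (K K' : Ideal (B n)) : Type :=
  ↥(K.restrictScalars ℂ) ⧸
    (Submodule.comap (K.restrictScalars ℂ).subtype (K'.restrictScalars ℂ))

/-- the class in `K / K'` of an element `p ∈ K`. -/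
def sqMk (n : ℕ) (K K' : Ideal (B n)) (p : B n) (hp : p ∈ K) : SQ n K K' :=
  Submodule.Quotient.mk ⟨p, hp⟩

/-- the inclusion `B m → B n` sending `x_t ↦ x_t`, `y_t ↦ y_t`. -/
def inclB (m n : ℕ) (h : m ≤ n) : B m →ₐ[ℂ] B n :=
  Ideal.Quotient.liftₐ (Bideal m)
    ((mkB n).comp (MvPolynomial.rename (Sum.map (Fin.castLE h) (Fin.castLE h))))
    (by
      intro a ha
      have hker : Bideal m ≤ RingHom.ker
          ((mkB n).comp (MvPolynomial.rename (Sum.map (Fin.castLE h) (Fin.castLE h)))).toRingHom := by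
        rw [Ideal.span_le]
        rintro _ ⟨i, rfl⟩
        simp only [SetLike.mem_coe, RingHom.mem_ker, AlgHom.toRingHom_eq_coe, RingHom.coe_coe,
          AlgHom.comp_apply, map_mul, rename_X, Sum.map_inl, Sum.map_inr]
        rw [← map_mul, Ideal.Quotient.mkₐ_eq_mk, Ideal.Quotient.eq_zero_iff_mem]
        exact Ideal.subset_span ⟨Fin.castLE h i, rfl⟩
      exact hker ha)

/-- extension of a permutation of `Fin m` to a permutation of `Fin n`
(acting as the identity on the extra letters). -/
def extPerm (m n : ℕ) (h : m ≤ n) (σ : Equiv.Perm (Fin m)) : Equiv.Perm (Fin n) :=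
  σ.viaFintypeEmbedding ⟨Fin.castLE h, Fin.castLE_injective h⟩

/-- the ideal of `B (m+1)` corresponding to the ideal `⟨xₙ^k, yₙ⟩` of `R^n_{i,j}`
(with `n = m+1`). -/
def LkIdeal (m i j k : ℕ) : Ideal (B (m + 1)) :=
  Iij (m + 1) i j ⊔
    Ideal.span {xv (m + 1) (Fin.last m) ^ k, yv (m + 1) (Fin.last m)}

/-- the ideal of `B (m+1)` corresponding to the ideal `⟨xₙ, yₙ⟩` of `R^n_{i,j}`. -/
def L0Ideal (m i j : ℕ) : Ideal (B (m + 1)) :=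
  Iij (m + 1) i j ⊔
    Ideal.span {xv (m + 1) (Fin.last m), yv (m + 1) (Fin.last m)}

/-- the ideal of `B (m+1)` corresponding to the ideal `⟨yₙ^{k'}⟩` of `R^n_{i,j}`. -/
def MyIdeal (m i j k' : ℕ) : Ideal (B (m + 1)) :=
  Iij (m + 1) i j ⊔ Ideal.span {yv (m + 1) (Fin.last m) ^ k'}

section Helpers
variable {n m : ℕ}

lemma permB_mk (σ : Equiv.Perm (Fin n)) (p : MvPolynomial (Fin n ⊕ Fin n) ℂ) :
    permB n σ (mkB n p) = mkB n (rename (Sum.map ⇑σ ⇑σ) p) := by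
  simp [permB, Ideal.Quotient.liftₐ_apply]
  rfl

lemma permB_xv (σ : Equiv.Perm (Fin n)) (t : Fin n) : permB n σ (xv n t) = xv n (σ t) := by
  rw [xv, permB_mk]; simp [xv]

lemma permB_yv (σ : Equiv.Perm (Fin n)) (t : Fin n) : permB n σ (yv n t) = yv n (σ t) := by
  rw [yv, permB_mk]; simp [yv]

lemma inclB_mk (h : m ≤ n) (p : MvPolynomial (Fin m ⊕ Fin m) ℂ) :
    inclB m n h (mkB m p) = mkB n (rename (Sum.map (Fin.castLE h) (Fin.castLE h)) p) := by
  simp [inclB, Ideal.Quotient.liftₐ_apply]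
  rfl

lemma inclB_xv (h : m ≤ n) (t : Fin m) : inclB m n h (xv m t) = xv n (Fin.castLE h t) := by
  rw [xv, inclB_mk]; simp [xv]

lemma inclB_yv (h : m ≤ n) (t : Fin m) : inclB m n h (yv m t) = yv n (Fin.castLE h t) := by
  rw [yv, inclB_mk]; simp [yv]

lemma xy_zero (t : Fin n) : xv n t * yv n t = 0 := by
  rw [xv, yv, ← map_mul, Ideal.Quotient.mkₐ_eq_mk, Ideal.Quotient.eq_zero_iff_mem]
  exact Ideal.subset_span ⟨t, rfl⟩

lemma permB_prod_xv (σ : Equiv.Perm (Fin n)) (I : Finset (Fin n)) :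
    permB n σ (∏ t ∈ I, xv n t) = ∏ t ∈ I.image σ, xv n t := by
  rw [map_prod, Finset.prod_image (fun a _ b _ h => σ.injective h)]
  exact Finset.prod_congr rfl fun t _ => permB_xv σ t

lemma permB_prod_yv (σ : Equiv.Perm (Fin n)) (I : Finset (Fin n)) :
    permB n σ (∏ t ∈ I, yv n t) = ∏ t ∈ I.image σ, yv n t := by
  rw [map_prod, Finset.prod_image (fun a _ b _ h => σ.injective h)]
  exact Finset.prod_congr rfl fun t _ => permB_yv σ t

lemma permB_eX (σ : Equiv.Perm (Fin n)) (l : ℕ) : permB n σ (eX n l) = eX n l := by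
  rw [eX, map_sum]
  rw [show (∑ S ∈ Finset.powersetCard l (Finset.univ : Finset (Fin n)),
      permB n σ (∏ t ∈ S, xv n t)) = ∑ S ∈ Finset.powersetCard l Finset.univ,
      ∏ t ∈ S.image σ, xv n t from Finset.sum_congr rfl fun S _ => permB_prod_xv σ S]
  refine Finset.sum_nbij' (fun S => S.image σ) (fun S => S.image σ.symm) ?_ ?_ ?_ ?_ ?_
  · intro S hS
    simp only [Finset.mem_powersetCard_univ] at *
    rw [Finset.card_image_of_injective _ σ.injective]; exact hS
  · intro S hS
    simp only [Finset.mem_powersetCard_univ] at *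
    rw [Finset.card_image_of_injective _ σ.symm.injective]; exact hS
  · intro S _; ext t; simp [Finset.mem_image]
  · intro S _; ext t; simp [Finset.mem_image]
  · intro S _; rfl

lemma permB_fY (σ : Equiv.Perm (Fin n)) (l : ℕ) : permB n σ (fY n l) = fY n l := by
  rw [fY, map_sum]
  rw [show (∑ S ∈ Finset.powersetCard l (Finset.univ : Finset (Fin n)),
      permB n σ (∏ t ∈ S, yv n t)) = ∑ S ∈ Finset.powersetCard l Finset.univ,
      ∏ t ∈ S.image σ, yv n t from Finset.sum_congr rfl fun S _ => permB_prod_yv σ S]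
  refine Finset.sum_nbij' (fun S => S.image σ) (fun S => S.image σ.symm) ?_ ?_ ?_ ?_ ?_
  · intro S hS
    simp only [Finset.mem_powersetCard_univ] at *
    rw [Finset.card_image_of_injective _ σ.injective]; exact hS
  · intro S hS
    simp only [Finset.mem_powersetCard_univ] at *
    rw [Finset.card_image_of_injective _ σ.symm.injective]; exact hS
  · intro S _; ext t; simp [Finset.mem_image]
  · intro S _; ext t; simp [Finset.mem_image]
  · intro S _; rfl

lemma permB_Iij (σ : Equiv.Perm (Fin n)) {i j : ℕ} {p : B n} (hp : p ∈ Iij n i j) :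
    permB n σ p ∈ Iij n i j := by
  have : Ideal.map (permB n σ).toRingHom (Iij n i j) ≤ Iij n i j := by
    rw [Iij, Ideal.map_span, Ideal.span_le]
    rintro _ ⟨q, hq, rfl⟩
    rcases hq with ((⟨l, hl1, hl2, rfl⟩ | ⟨I, hI, rfl⟩) | ⟨l, hl1, hl2, rfl⟩) | ⟨J, hJ, rfl⟩
    · rw [SetLike.mem_coe]
      exact Ideal.subset_span (Or.inl (Or.inl (Or.inl ⟨l, hl1, hl2, by simpa using permB_eX σ l⟩)))
    · rw [SetLike.mem_coe]
      refine Ideal.subset_span (Or.inl (Or.inl (Or.inr ⟨I.image σ, ?_, by simpa using permB_prod_xv σ I⟩)))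
      rw [Finset.card_image_of_injective _ σ.injective]; exact hI
    · rw [SetLike.mem_coe]
      exact Ideal.subset_span (Or.inl (Or.inr ⟨l, hl1, hl2, by simpa using permB_fY σ l⟩))
    · rw [SetLike.mem_coe]
      refine Ideal.subset_span (Or.inr ⟨J.image σ, ?_, by simpa using permB_prod_yv σ J⟩)
      rw [Finset.card_image_of_injective _ σ.injective]; exact hJ
  exact this (Ideal.mem_map_of_mem _ hp)

lemma extPerm_castLE (h : m ≤ n) (σ : Equiv.Perm (Fin m)) (t : Fin m) :
    extPerm m n h σ (Fin.castLE h t) = Fin.castLE h (σ t) := by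
  exact Equiv.Perm.viaFintypeEmbedding_apply_image σ ⟨Fin.castLE h, Fin.castLE_injective h⟩ t

lemma extPerm_last (σ : Equiv.Perm (Fin m)) :
    extPerm m (m + 1) (Nat.le_succ m) σ (Fin.last m) = Fin.last m := by
  refine Equiv.Perm.viaFintypeEmbedding_apply_notMem_range σ _ ?_
  rintro ⟨t, ht⟩
  have := congrArg Fin.val ht
  simp only [Function.Embedding.coeFn_mk, Fin.coe_castLE, Fin.val_last] at this
  omega

lemma extPerm_xv_last (σ : Equiv.Perm (Fin m)) :
    permB (m + 1) (extPerm m (m + 1) (Nat.le_succ m) σ) (xv (m + 1) (Fin.last m)) =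
      xv (m + 1) (Fin.last m) := by
  rw [permB_xv, extPerm_last]

lemma extPerm_yv_last (σ : Equiv.Perm (Fin m)) :
    permB (m + 1) (extPerm m (m + 1) (Nat.le_succ m) σ) (yv (m + 1) (Fin.last m)) =
      yv (m + 1) (Fin.last m) := by
  rw [permB_yv, extPerm_last]

lemma inclB_permB (σ : Equiv.Perm (Fin m)) (P : B m) :
    inclB m (m + 1) (Nat.le_succ m) (permB m σ P) =
      permB (m + 1) (extPerm m (m + 1) (Nat.le_succ m) σ)
        (inclB m (m + 1) (Nat.le_succ m) P) := by
  obtain ⟨p, rfl⟩ := Ideal.Quotient.mkₐ_surjective ℂ _ P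
  rw [show (Ideal.Quotient.mkₐ ℂ (Bideal m)) p = mkB m p from rfl]
  rw [permB_mk, inclB_mk, inclB_mk, permB_mk, rename_rename, rename_rename]
  have hfun : (Sum.map (Fin.castLE (Nat.le_succ m)) (Fin.castLE (Nat.le_succ m))) ∘ Sum.map ⇑σ ⇑σ =
      (Sum.map ⇑(extPerm m (m + 1) (Nat.le_succ m) σ) ⇑(extPerm m (m + 1) (Nat.le_succ m) σ)) ∘
        Sum.map (Fin.castLE (Nat.le_succ m)) (Fin.castLE (Nat.le_succ m)) := by
    funext s
    cases s with
    | inl t => simp [extPerm_castLE]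
    | inr t => simp [extPerm_castLE]
  rw [hfun]

lemma inclB_prod_xv (I : Finset (Fin m)) :
    inclB m (m + 1) (Nat.le_succ m) (∏ t ∈ I, xv m t) =
      ∏ t ∈ I.image (Fin.castLE (Nat.le_succ m)), xv (m + 1) t := by
  rw [map_prod, Finset.prod_image (fun a _ b _ h => Fin.castLE_injective _ h)]
  exact Finset.prod_congr rfl fun t _ => inclB_xv _ t

lemma inclB_prod_yv (I : Finset (Fin m)) :
    inclB m (m + 1) (Nat.le_succ m) (∏ t ∈ I, yv m t) =
      ∏ t ∈ I.image (Fin.castLE (Nat.le_succ m)), yv (m + 1) t := by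
  rw [map_prod, Finset.prod_image (fun a _ b _ h => Fin.castLE_injective _ h)]
  exact Finset.prod_congr rfl fun t _ => inclB_yv _ t

lemma last_not_mem_image (I : Finset (Fin m)) :
    Fin.last m ∉ I.image (Fin.castLE (Nat.le_succ m)) := by
  simp only [Finset.mem_image, not_exists]
  rintro t ⟨_, ht⟩
  have := congrArg Fin.val ht
  simp only [Fin.coe_castLE, Fin.val_last] at this
  exact absurd this (Nat.ne_of_lt t.isLt)

lemma card_image_castLE (I : Finset (Fin m)) :
    (I.image (Fin.castLE (Nat.le_succ m))).card = I.card :=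
  Finset.card_image_of_injective _ (Fin.castLE_injective _)

lemma sum_powersetCard_not_last {M : Type*} [CommSemiring M] (l : ℕ) (v : Fin (m + 1) → M) :
    (∑ S ∈ (Finset.powersetCard l (Finset.univ : Finset (Fin (m + 1)))).filter
        (fun S => Fin.last m ∉ S), ∏ t ∈ S, v t) =
      ∑ S ∈ Finset.powersetCard l (Finset.univ : Finset (Fin m)),
        ∏ t ∈ S.image (Fin.castLE (Nat.le_succ m)), v t := by
    have hrange : ∀ S ∈ (Finset.powersetCard l (Finset.univ : Finset (Fin (m + 1)))).filter
        (fun S => Fin.last m ∉ S),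
        ((S.preimage (Fin.castLE (Nat.le_succ m))
          ((Fin.castLE_injective _).injOn)).image (Fin.castLE (Nat.le_succ m))) = S := by
      intro S hS
      rw [Finset.mem_filter] at hS
      rw [Finset.image_preimage]
      refine Finset.filter_true_of_mem fun t ht => ?_
      have htlt : t.val < m := by
        rcases Nat.lt_or_ge t.val m with h | h
        · exact h
        · exfalso
          have : t = Fin.last m := by
            apply Fin.ext
            have := t.isLt
            simp only [Fin.val_last]
            omega
          exact hS.2 (this ▸ ht)
      exact ⟨⟨t.val, htlt⟩, Fin.ext rfl⟩
    refine (Finset.sum_nbij' (fun S => S.image (Fin.castLE (Nat.le_succ m)))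
      (fun S => S.preimage (Fin.castLE (Nat.le_succ m))
          ((Fin.castLE_injective _).injOn)) ?_ ?_ ?_ ?_ ?_).symm
    · intro S hS
      rw [Finset.mem_powersetCard_univ] at hS
      rw [Finset.mem_filter, Finset.mem_powersetCard_univ, card_image_castLE]
      exact ⟨hS, last_not_mem_image S⟩
    · intro S hS
      rw [Finset.mem_powersetCard_univ]
      have h1 := hrange S hS
      rw [Finset.mem_filter, Finset.mem_powersetCard_univ] at hS
      calc (S.preimage (Fin.castLE (Nat.le_succ m)) ((Fin.castLE_injective _).injOn)).card
          = ((S.preimage (Fin.castLE (Nat.le_succ m))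
              ((Fin.castLE_injective _).injOn)).image (Fin.castLE (Nat.le_succ m))).card :=
            (card_image_castLE _).symm
        _ = S.card := by rw [h1]
        _ = l := hS.1
    · intro S _
      ext t
      simp only [Finset.mem_preimage, Finset.mem_image]
      constructor
      · rintro ⟨u, hu, h⟩
        rwa [Fin.castLE_injective _ h] at hu
      · intro ht; exact ⟨t, ht, rfl⟩
    · intro S hS
      exact hrange S hS
    · intro S _; rfl

/-- recursion: `e_l^{(m+1)} ≡ incl e_l^{(m)}` mod `(xₙ)`. -/
lemma eX_rec (l : ℕ) :
    eX (m + 1) l - inclB m (m + 1) (Nat.le_succ m) (eX m l) ∈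
      Ideal.span {xv (m + 1) (Fin.last m)} := by
  classical
  rw [eX, eX, map_sum]
  have hsplit := Finset.sum_filter_add_sum_filter_not
    (Finset.powersetCard l (Finset.univ : Finset (Fin (m + 1))))
    (fun S => Fin.last m ∈ S) (fun S => ∏ t ∈ S, xv (m + 1) t)
  rw [← hsplit]
  have h2 : (∑ S ∈ (Finset.powersetCard l (Finset.univ : Finset (Fin (m + 1)))).filter
        (fun S => Fin.last m ∉ S), ∏ t ∈ S, xv (m + 1) t) =
      ∑ S ∈ Finset.powersetCard l (Finset.univ : Finset (Fin m)),
        inclB m (m + 1) (Nat.le_succ m) (∏ t ∈ S, xv m t) := by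
    rw [Finset.sum_congr rfl (fun S _ => inclB_prod_xv S)]
    exact sum_powersetCard_not_last l _
  rw [h2]
  have h1 : (∑ S ∈ (Finset.powersetCard l (Finset.univ : Finset (Fin (m + 1)))).filter
        (fun S => Fin.last m ∈ S), ∏ t ∈ S, xv (m + 1) t) ∈
      Ideal.span {xv (m + 1) (Fin.last m)} := by
    refine Ideal.sum_mem _ fun S hS => ?_
    rw [Finset.mem_filter] at hS
    rw [← Finset.mul_prod_erase _ _ hS.2]
    exact Ideal.mul_mem_right _ _ (Ideal.subset_span rfl)
  simpa using h1

/-- recursion: `f_l^{(m+1)} ≡ incl f_l^{(m)}` mod `(yₙ)`. -/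
lemma fY_rec (l : ℕ) :
    fY (m + 1) l - inclB m (m + 1) (Nat.le_succ m) (fY m l) ∈
      Ideal.span {yv (m + 1) (Fin.last m)} := by
  classical
  rw [fY, fY, map_sum]
  have hsplit := Finset.sum_filter_add_sum_filter_not
    (Finset.powersetCard l (Finset.univ : Finset (Fin (m + 1))))
    (fun S => Fin.last m ∈ S) (fun S => ∏ t ∈ S, yv (m + 1) t)
  rw [← hsplit]
  have h2 : (∑ S ∈ (Finset.powersetCard l (Finset.univ : Finset (Fin (m + 1)))).filter
        (fun S => Fin.last m ∉ S), ∏ t ∈ S, yv (m + 1) t) =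
      ∑ S ∈ Finset.powersetCard l (Finset.univ : Finset (Fin m)),
        inclB m (m + 1) (Nat.le_succ m) (∏ t ∈ S, yv m t) := by
    rw [Finset.sum_congr rfl (fun S _ => inclB_prod_yv S)]
    exact sum_powersetCard_not_last l _
  rw [h2]
  have h1 : (∑ S ∈ (Finset.powersetCard l (Finset.univ : Finset (Fin (m + 1)))).filter
        (fun S => Fin.last m ∈ S), ∏ t ∈ S, yv (m + 1) t) ∈
      Ideal.span {yv (m + 1) (Fin.last m)} := by
    refine Ideal.sum_mem _ fun S hS => ?_
    rw [Finset.mem_filter] at hS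
    rw [← Finset.mul_prod_erase _ _ hS.2]
    exact Ideal.mul_mem_right _ _ (Ideal.subset_span rfl)
  simpa using h1


/-- the retraction `B (m+1) → B m` sending `x_{last}, y_{last}` to `0`. -/
def retr (m : ℕ) : B (m + 1) →ₐ[ℂ] B m :=
  Ideal.Quotient.liftₐ (Bideal (m + 1))
    (aeval (fun s : Fin (m + 1) ⊕ Fin (m + 1) => match s with
      | Sum.inl t => if h : t.val < m then xv m ⟨t.val, h⟩ else 0
      | Sum.inr t => if h : t.val < m then yv m ⟨t.val, h⟩ else 0))
    (by
      intro a ha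
      set g : Fin (m + 1) ⊕ Fin (m + 1) → B m := fun s => match s with
        | Sum.inl t => if h : t.val < m then xv m ⟨t.val, h⟩ else 0
        | Sum.inr t => if h : t.val < m then yv m ⟨t.val, h⟩ else 0 with hg
      have h : Bideal (m + 1) ≤ RingHom.ker (aeval (R := ℂ) g).toRingHom := by
        rw [Ideal.span_le]
        rintro _ ⟨t, rfl⟩
        simp only [SetLike.mem_coe, RingHom.mem_ker, AlgHom.toRingHom_eq_coe, RingHom.coe_coe,
          map_mul, aeval_X]
        by_cases h : t.val < m
        · simp only [hg, h, dif_pos]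
          exact xy_zero _
        · simp [hg, h]
      exact h ha)

lemma retr_approx (Q : B (m + 1)) :
    Q - inclB m (m + 1) (Nat.le_succ m) (retr m Q) ∈
      Ideal.span {xv (m + 1) (Fin.last m), yv (m + 1) (Fin.last m)} := by
  obtain ⟨p, rfl⟩ := Ideal.Quotient.mkₐ_surjective ℂ _ Q
  rw [show (Ideal.Quotient.mkₐ ℂ (Bideal (m + 1))) p = mkB (m + 1) p from rfl]
  set N := Ideal.span {xv (m + 1) (Fin.last m), yv (m + 1) (Fin.last m)} with hN
  set ψ : B (m + 1) →ₐ[ℂ] B (m + 1) :=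
    (inclB m (m + 1) (Nat.le_succ m)).comp (retr m) with hψ
  suffices h : ∀ p : MvPolynomial (Fin (m + 1) ⊕ Fin (m + 1)) ℂ,
      mkB (m + 1) p - ψ (mkB (m + 1) p) ∈ N by exact h p
  intro p
  induction p using MvPolynomial.induction_on with
  | C a => simp only [← MvPolynomial.algebraMap_eq, AlgHom.commutes]; simp
  | add p q hp hq =>
    have := N.add_mem hp hq
    simpa [map_add, add_sub_add_comm] using this
  | mul_X p s hp =>
    have hXs : mkB (m + 1) (X s) - ψ (mkB (m + 1) (X s)) ∈ N := by
      cases s with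
      | inl t =>
        by_cases h : t.val < m
        · have : ψ (mkB (m + 1) (X (Sum.inl t))) = mkB (m + 1) (X (Sum.inl t)) := by
            rw [hψ, AlgHom.comp_apply]
            rw [show mkB (m + 1) (X (Sum.inl t)) = xv (m + 1) t from rfl]
            rw [show retr m (xv (m + 1) t) = xv m ⟨t.val, h⟩ from by
              rw [xv, retr, Ideal.Quotient.liftₐ_apply, Ideal.Quotient.mkₐ_eq_mk]
              change (aeval _ : MvPolynomial (Fin (m + 1) ⊕ Fin (m + 1)) ℂ →ₐ[ℂ] B m) (X _) = _
              simp [h]]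
            rw [inclB_xv]
            congr 1
          rw [this, sub_self]; exact N.zero_mem
        · have ht : t = Fin.last m := Fin.ext (by have := t.isLt; simp only [Fin.val_last]; omega)
          have : ψ (mkB (m + 1) (X (Sum.inl t))) = 0 := by
            rw [hψ, AlgHom.comp_apply]
            rw [show mkB (m + 1) (X (Sum.inl t)) = xv (m + 1) t from rfl]
            rw [show retr m (xv (m + 1) t) = 0 from by
              rw [xv, retr, Ideal.Quotient.liftₐ_apply, Ideal.Quotient.mkₐ_eq_mk]
              change (aeval _ : MvPolynomial (Fin (m + 1) ⊕ Fin (m + 1)) ℂ →ₐ[ℂ] B m) (X _) = _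
              simp [h]]
            exact map_zero _
          rw [this, sub_zero, ht]
          exact Ideal.subset_span (Or.inl rfl)
      | inr t =>
        by_cases h : t.val < m
        · have : ψ (mkB (m + 1) (X (Sum.inr t))) = mkB (m + 1) (X (Sum.inr t)) := by
            rw [hψ, AlgHom.comp_apply]
            rw [show mkB (m + 1) (X (Sum.inr t)) = yv (m + 1) t from rfl]
            rw [show retr m (yv (m + 1) t) = yv m ⟨t.val, h⟩ from by
              rw [yv, retr, Ideal.Quotient.liftₐ_apply, Ideal.Quotient.mkₐ_eq_mk]
              change (aeval _ : MvPolynomial (Fin (m + 1) ⊕ Fin (m + 1)) ℂ →ₐ[ℂ] B m) (X _) = _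
              simp [h]]
            rw [inclB_yv]
            congr 1
          rw [this, sub_self]; exact N.zero_mem
        · have ht : t = Fin.last m := Fin.ext (by have := t.isLt; simp only [Fin.val_last]; omega)
          have : ψ (mkB (m + 1) (X (Sum.inr t))) = 0 := by
            rw [hψ, AlgHom.comp_apply]
            rw [show mkB (m + 1) (X (Sum.inr t)) = yv (m + 1) t from rfl]
            rw [show retr m (yv (m + 1) t) = 0 from by
              rw [yv, retr, Ideal.Quotient.liftₐ_apply, Ideal.Quotient.mkₐ_eq_mk]
              change (aeval _ : MvPolynomial (Fin (m + 1) ⊕ Fin (m + 1)) ℂ →ₐ[ℂ] B m) (X _) = _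
              simp [h]]
            exact map_zero _
          rw [this, sub_zero, ht]
          exact Ideal.subset_span (Or.inr rfl)
    have key : mkB (m + 1) (p * X s) - ψ (mkB (m + 1) (p * X s)) =
        mkB (m + 1) p * (mkB (m + 1) (X s) - ψ (mkB (m + 1) (X s))) +
        ψ (mkB (m + 1) (X s)) * (mkB (m + 1) p - ψ (mkB (m + 1) p)) := by
      simp only [map_mul]; ring
    rw [key]
    exact N.add_mem (Ideal.mul_mem_left _ _ hXs) (Ideal.mul_mem_left _ _ hp)

lemma permB_sup_span (σ : Equiv.Perm (Fin m)) {i j : ℕ} {T : Set (B (m + 1))}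
    (hT : ∀ a ∈ T, permB (m + 1) (extPerm m (m + 1) (Nat.le_succ m) σ) a = a)
    {p : B (m + 1)} (hp : p ∈ Iij (m + 1) i j ⊔ Ideal.span T) :
    permB (m + 1) (extPerm m (m + 1) (Nat.le_succ m) σ) p ∈ Iij (m + 1) i j ⊔ Ideal.span T := by
  rcases Submodule.mem_sup.mp hp with ⟨u, hu, v, hv, rfl⟩
  rw [map_add]
  refine Submodule.add_mem _ (Ideal.mem_sup_left (permB_Iij _ hu)) (Ideal.mem_sup_right ?_)
  have hmap : Ideal.map (permB (m + 1) (extPerm m (m + 1) (Nat.le_succ m) σ)).toRingHom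
      (Ideal.span T) ≤ Ideal.span T := by
    rw [Ideal.map_span, Ideal.span_le]
    rintro _ ⟨a, ha, rfl⟩
    exact Ideal.subset_span (by simpa [hT a ha] using ha)
  exact hmap (Ideal.mem_map_of_mem _ hv)

lemma permB_LkIdeal (σ : Equiv.Perm (Fin m)) {i j l : ℕ} {p : B (m + 1)}
    (hp : p ∈ LkIdeal m i j l) :
    permB (m + 1) (extPerm m (m + 1) (Nat.le_succ m) σ) p ∈ LkIdeal m i j l := by
  refine permB_sup_span σ ?_ hp
  rintro a (rfl | rfl)
  · rw [map_pow, extPerm_xv_last]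
  · exact extPerm_yv_last σ

lemma permB_L0Ideal (σ : Equiv.Perm (Fin m)) {i j : ℕ} {p : B (m + 1)}
    (hp : p ∈ L0Ideal m i j) :
    permB (m + 1) (extPerm m (m + 1) (Nat.le_succ m) σ) p ∈ L0Ideal m i j := by
  refine permB_sup_span σ ?_ hp
  rintro a (rfl | rfl)
  · exact extPerm_xv_last σ
  · exact extPerm_yv_last σ

lemma permB_MyIdeal (σ : Equiv.Perm (Fin m)) {i j l : ℕ} {p : B (m + 1)}
    (hp : p ∈ MyIdeal m i j l) :
    permB (m + 1) (extPerm m (m + 1) (Nat.le_succ m) σ) p ∈ MyIdeal m i j l := by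
  refine permB_sup_span σ ?_ hp
  rintro a rfl
  rw [map_pow, extPerm_yv_last]

lemma sqMk_eq_iff {K K' : Ideal (B n)} {p q : B n} (hp : p ∈ K) (hq : q ∈ K) :
    sqMk n K K' p hp = sqMk n K K' q hq ↔ p - q ∈ K' := by
  rw [sqMk, sqMk, Submodule.Quotient.eq]
  simp [Submodule.mem_comap]

section Keys
variable (m : ℕ)

local notation "xL" => xv (m + 1) (Fin.last m)
local notation "yL" => yv (m + 1) (Fin.last m)
local notation "ι" => inclB m (m + 1) (Nat.le_succ m)

lemma incl_eX_mem {i j l : ℕ} (hl1 : 1 ≤ l) (hl2 : l < i) :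
    (ι) (eX m l) ∈ Iij (m + 1) i j ⊔ Ideal.span {xv (m + 1) (Fin.last m)} := by
  have h1 : eX (m + 1) l ∈ Iij (m + 1) i j :=
    Ideal.subset_span (Or.inl (Or.inl (Or.inl ⟨l, hl1, hl2, rfl⟩)))
  have h2 := eX_rec (m := m) l
  have : (ι) (eX m l) = eX (m + 1) l - (eX (m + 1) l - (ι) (eX m l)) := by ring
  rw [this]
  exact Submodule.sub_mem _ (Ideal.mem_sup_left h1) (Ideal.mem_sup_right h2)

lemma incl_fY_mem {i j l : ℕ} (hl1 : 1 ≤ l) (hl2 : l < j) :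
    (ι) (fY m l) ∈ Iij (m + 1) i j ⊔ Ideal.span {yv (m + 1) (Fin.last m)} := by
  have h1 : fY (m + 1) l ∈ Iij (m + 1) i j :=
    Ideal.subset_span (Or.inl (Or.inr ⟨l, hl1, hl2, rfl⟩))
  have h2 := fY_rec (m := m) l
  have : (ι) (fY m l) = fY (m + 1) l - (fY (m + 1) l - (ι) (fY m l)) := by ring
  rw [this]
  exact Submodule.sub_mem _ (Ideal.mem_sup_left h1) (Ideal.mem_sup_right h2)

lemma incl_xprod_mem {i j : ℕ} (I : Finset (Fin m)) (hI : I.card = i) :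
    (ι) (∏ t ∈ I, xv m t) ∈ Iij (m + 1) i j := by
  rw [inclB_prod_xv]
  exact Ideal.subset_span (Or.inl (Or.inl (Or.inr
    ⟨I.image (Fin.castLE (Nat.le_succ m)), by rw [card_image_castLE, hI], rfl⟩)))

lemma incl_yprod_mem {i j : ℕ} (J : Finset (Fin m)) (hJ : J.card = j) :
    (ι) (∏ t ∈ J, yv m t) ∈ Iij (m + 1) i j := by
  rw [inclB_prod_yv]
  exact Ideal.subset_span (Or.inr
    ⟨J.image (Fin.castLE (Nat.le_succ m)), by rw [card_image_castLE, hJ], rfl⟩)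

lemma xL_xprod_mem {i j : ℕ} (hi : 1 ≤ i) (I : Finset (Fin m)) (hI : I.card = i - 1) :
    xL * (ι) (∏ t ∈ I, xv m t) ∈ Iij (m + 1) i j := by
  rw [inclB_prod_xv, ← Finset.prod_insert (last_not_mem_image I)]
  refine Ideal.subset_span (Or.inl (Or.inl (Or.inr ⟨insert (Fin.last m)
    (I.image (Fin.castLE (Nat.le_succ m))), ?_, rfl⟩)))
  rw [Finset.card_insert_of_notMem (last_not_mem_image I), card_image_castLE, hI]
  omega

lemma yL_yprod_mem {i j : ℕ} (hj : 1 ≤ j) (J : Finset (Fin m)) (hJ : J.card = j - 1) :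
    yL * (ι) (∏ t ∈ J, yv m t) ∈ Iij (m + 1) i j := by
  rw [inclB_prod_yv, ← Finset.prod_insert (last_not_mem_image J)]
  refine Ideal.subset_span (Or.inr ⟨insert (Fin.last m)
    (J.image (Fin.castLE (Nat.le_succ m))), ?_, rfl⟩)
  rw [Finset.card_insert_of_notMem (last_not_mem_image J), card_image_castLE, hJ]
  omega

/-- well-definedness of `φ₀`. -/
lemma incl_Iij_mem_L0 {i j : ℕ} {P : B m} (hP : P ∈ Iij m i j) :
    (ι) P ∈ L0Ideal m i j := by
  have h : Iij m i j ≤ Ideal.comap (ι).toRingHom (L0Ideal m i j) := by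
    rw [Iij, Ideal.span_le]
    rintro _ (((⟨l, hl1, hl2, rfl⟩ | ⟨I, hI, rfl⟩) | ⟨l, hl1, hl2, rfl⟩) | ⟨J, hJ, rfl⟩) <;>
      simp only [SetLike.mem_coe, Ideal.mem_comap, AlgHom.toRingHom_eq_coe, RingHom.coe_coe]
    · obtain ⟨u, hu, v, hv, heq⟩ := Submodule.mem_sup.mp (incl_eX_mem m (j := j) hl1 hl2)
      rw [← heq]
      refine Submodule.add_mem _ (Ideal.mem_sup_left hu) (Ideal.mem_sup_right ?_)
      obtain ⟨r, hr⟩ := Ideal.mem_span_singleton'.mp hv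
      exact Ideal.mem_span_pair.mpr ⟨r, 0, by rw [zero_mul, add_zero, hr]⟩
    · exact Ideal.mem_sup_left (incl_xprod_mem m I hI)
    · obtain ⟨u, hu, v, hv, heq⟩ := Submodule.mem_sup.mp (incl_fY_mem m (i := i) hl1 hl2)
      rw [← heq]
      refine Submodule.add_mem _ (Ideal.mem_sup_left hu) (Ideal.mem_sup_right ?_)
      obtain ⟨r, hr⟩ := Ideal.mem_span_singleton'.mp hv
      exact Ideal.mem_span_pair.mpr ⟨0, r, by rw [zero_mul, zero_add, hr]⟩
    · exact Ideal.mem_sup_left (incl_yprod_mem m J hJ)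
  exact h hP

/-- well-definedness of `φ_k`. -/
lemma xk_incl_Iij_mem {i j k : ℕ} (hi : 1 ≤ i) (hk1 : 1 ≤ k) {P : B m}
    (hP : P ∈ Iij m (i - 1) j) :
    xL ^ k * (ι) P ∈ LkIdeal m i j (k + 1) := by
  obtain ⟨k0, rfl⟩ : ∃ k0, k = k0 + 1 := ⟨k - 1, (Nat.sub_add_cancel hk1).symm⟩
  rw [Iij] at hP
  induction hP using Submodule.span_induction with
  | mem P hPm =>
    rcases hPm with ((⟨l, hl1, hl2, rfl⟩ | ⟨I, hI, rfl⟩) | ⟨l, hl1, hl2, rfl⟩) | ⟨J, hJ, rfl⟩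
    · obtain ⟨u, hu, v, hv, heq⟩ := Submodule.mem_sup.mp (incl_eX_mem m (i := i) (j := j) hl1 (by omega))
      rw [← heq, mul_add]
      refine Submodule.add_mem _
        (Ideal.mem_sup_left (Ideal.mul_mem_left _ _ hu)) (Ideal.mem_sup_right ?_)
      obtain ⟨r, hr⟩ := Ideal.mem_span_singleton'.mp hv
      refine Ideal.mem_span_pair.mpr ⟨r, 0, ?_⟩
      rw [← hr]; ring
    · refine Ideal.mem_sup_left ?_
      have heq : xL ^ (k0 + 1) * (ι) (∏ t ∈ I, xv m t) =
          xL ^ k0 * (xL * (ι) (∏ t ∈ I, xv m t)) := by ring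
      rw [heq]
      exact Ideal.mul_mem_left _ _ (xL_xprod_mem m hi I hI)
    · obtain ⟨u, hu, v, hv, heq⟩ := Submodule.mem_sup.mp (incl_fY_mem m (i := i) hl1 hl2)
      rw [← heq, mul_add]
      refine Submodule.add_mem _
        (Ideal.mem_sup_left (Ideal.mul_mem_left _ _ hu)) (Ideal.mem_sup_right ?_)
      obtain ⟨r, hr⟩ := Ideal.mem_span_singleton'.mp hv
      refine Ideal.mem_span_pair.mpr ⟨0, xL ^ (k0 + 1) * r, ?_⟩
      rw [← hr]; ring
    · exact Ideal.mem_sup_left (Ideal.mul_mem_left _ _ (incl_yprod_mem m J hJ))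
  | zero => rw [map_zero, mul_zero]; exact Submodule.zero_mem _
  | add P Q _ _ hP hQ => rw [map_add, mul_add]; exact Submodule.add_mem _ hP hQ
  | smul a P _ hP =>
    rw [smul_eq_mul, map_mul]
    have heq : xL ^ (k0 + 1) * ((ι) a * (ι) P) = (ι) a * (xL ^ (k0 + 1) * (ι) P) := by ring
    rw [heq]
    exact Ideal.mul_mem_left _ _ hP

/-- well-definedness of `φ'_{k'}`. -/
lemma yk_incl_Iij_mem {i j k' : ℕ} (hj : 1 ≤ j) (hk'1 : 1 ≤ k') {P : B m}
    (hP : P ∈ Iij m i (j - 1)) :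
    yL ^ k' * (ι) P ∈ MyIdeal m i j (k' + 1) := by
  obtain ⟨k0, rfl⟩ : ∃ k0, k' = k0 + 1 := ⟨k' - 1, (Nat.sub_add_cancel hk'1).symm⟩
  rw [Iij] at hP
  induction hP using Submodule.span_induction with
  | mem P hPm =>
    rcases hPm with ((⟨l, hl1, hl2, rfl⟩ | ⟨I, hI, rfl⟩) | ⟨l, hl1, hl2, rfl⟩) | ⟨J, hJ, rfl⟩
    · obtain ⟨u, hu, v, hv, heq⟩ := Submodule.mem_sup.mp (incl_eX_mem m (j := j) hl1 hl2)
      rw [← heq, mul_add]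
      refine Submodule.add_mem _
        (Ideal.mem_sup_left (Ideal.mul_mem_left _ _ hu)) ?_
      obtain ⟨r, hr⟩ := Ideal.mem_span_singleton'.mp hv
      have hz : yL ^ (k0 + 1) * v = 0 := by
        rw [← hr]
        have h0 : xL * yL = 0 := xy_zero _
        calc yL ^ (k0 + 1) * (r * xL) = r * yL ^ k0 * (xL * yL) := by ring
        _ = 0 := by rw [h0, mul_zero]
      rw [hz]; exact Submodule.zero_mem _
    · exact Ideal.mem_sup_left (Ideal.mul_mem_left _ _ (incl_xprod_mem m I hI))
    · obtain ⟨u, hu, v, hv, heq⟩ := Submodule.mem_sup.mp (incl_fY_mem m (i := i) (j := j) hl1 (by omega))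
      rw [← heq, mul_add]
      refine Submodule.add_mem _
        (Ideal.mem_sup_left (Ideal.mul_mem_left _ _ hu)) (Ideal.mem_sup_right ?_)
      obtain ⟨r, hr⟩ := Ideal.mem_span_singleton'.mp hv
      refine Ideal.mem_span_singleton'.mpr ⟨r, ?_⟩
      rw [← hr]; ring
    · refine Ideal.mem_sup_left ?_
      have heq : yL ^ (k0 + 1) * (ι) (∏ t ∈ J, yv m t) =
          yL ^ k0 * (yL * (ι) (∏ t ∈ J, yv m t)) := by ring
      rw [heq]
      exact Ideal.mul_mem_left _ _ (yL_yprod_mem m hj J hJ)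
  | zero => rw [map_zero, mul_zero]; exact Submodule.zero_mem _
  | add P Q _ _ hP hQ => rw [map_add, mul_add]; exact Submodule.add_mem _ hP hQ
  | smul a P _ hP =>
    rw [smul_eq_mul, map_mul]
    have heq : yL ^ (k0 + 1) * ((ι) a * (ι) P) = (ι) a * (yL ^ (k0 + 1) * (ι) P) := by ring
    rw [heq]
    exact Ideal.mul_mem_left _ _ hP

lemma approx_x {k : ℕ} (hk1 : 1 ≤ k) (a : B (m + 1)) :
    a * xL ^ k - xL ^ k * (ι) (retr m a) ∈
      Ideal.span {xv (m + 1) (Fin.last m) ^ (k + 1), yv (m + 1) (Fin.last m)} := by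
  obtain ⟨k0, rfl⟩ : ∃ k0, k = k0 + 1 := ⟨k - 1, (Nat.sub_add_cancel hk1).symm⟩
  obtain ⟨r, s, hrs⟩ := Ideal.mem_span_pair.mp (retr_approx a)
  refine Ideal.mem_span_pair.mpr ⟨r, 0, ?_⟩
  have h0 : xL * yL = 0 := xy_zero _
  have key : a * xL ^ (k0 + 1) - xL ^ (k0 + 1) * (ι) (retr m a) =
      (r * xL + s * yL) * xL ^ (k0 + 1) := by rw [hrs]; ring
  rw [key]
  calc r * xL ^ (k0 + 1 + 1) + 0 * yL = (r * xL + s * yL) * xL ^ (k0 + 1) -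
      (s * xL ^ k0) * (xL * yL) := by ring
  _ = (r * xL + s * yL) * xL ^ (k0 + 1) := by rw [h0, mul_zero, sub_zero]

lemma approx_y {k' : ℕ} (hk'1 : 1 ≤ k') (a : B (m + 1)) :
    a * yL ^ k' - yL ^ k' * (ι) (retr m a) ∈
      Ideal.span {yv (m + 1) (Fin.last m) ^ (k' + 1)} := by
  obtain ⟨k0, rfl⟩ : ∃ k0, k' = k0 + 1 := ⟨k' - 1, (Nat.sub_add_cancel hk'1).symm⟩
  obtain ⟨r, s, hrs⟩ := Ideal.mem_span_pair.mp (retr_approx a)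
  refine Ideal.mem_span_singleton'.mpr ⟨s, ?_⟩
  have h0 : xL * yL = 0 := xy_zero _
  have key : a * yL ^ (k0 + 1) - yL ^ (k0 + 1) * (ι) (retr m a) =
      (r * xL + s * yL) * yL ^ (k0 + 1) := by rw [hrs]; ring
  rw [key]
  calc s * yL ^ (k0 + 1 + 1) = (r * xL + s * yL) * yL ^ (k0 + 1) -
      (r * yL ^ k0) * (xL * yL) := by ring
  _ = (r * xL + s * yL) * yL ^ (k0 + 1) := by rw [h0, mul_zero, sub_zero]

end Keys
end Helpers

/-- (Here `n = m + 1`, so `i + j ≤ n` reads `i + j ≤ m + 1`.)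
For `i, j ≥ 1` with `i + j ≤ n`, `1 ≤ k ≤ i−1` and `1 ≤ k' ≤ j−1`, the three maps
`φ₀ : R^{n−1}_{i,j} → R^n_{i,j}/⟨xₙ, yₙ⟩`, `P ↦ P`,
`φ_k : R^{n−1}_{i−1,j} → ⟨xₙ^k, yₙ⟩/⟨xₙ^{k+1}, yₙ⟩`, `P ↦ xₙ^k P`, and
`φ'_{k'} : R^{n−1}_{i,j−1} → ⟨yₙ^{k'}⟩/⟨yₙ^{k'+1}⟩`, `P ↦ yₙ^{k'} P`,
are well-defined surjective homomorphisms of `ℂ[S_{n−1}]`-modules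
(equivariance is expressed on representatives, with `S_{n−1} ≤ Sₙ` permuting the
first `n−1` letters). -/
theorem recursive_surjections_general_case (m i j k k' : ℕ) (hi : 1 ≤ i) (hj : 1 ≤ j)
    (hij : i + j ≤ m + 1) (hk1 : 1 ≤ k) (hk2 : k ≤ i - 1) (hk'1 : 1 ≤ k') (hk'2 : k' ≤ j - 1) :
    (∃ φ : (B m ⧸ Iij m i j) →ₗ[ℂ] (B (m + 1) ⧸ L0Ideal m i j),
      (∀ P : B m, φ (Ideal.Quotient.mk (Iij m i j) P) =
        Ideal.Quotient.mk (L0Ideal m i j) (inclB m (m + 1) (Nat.le_succ m) P)) ∧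
      Function.Surjective φ ∧
      (∀ (σ : Equiv.Perm (Fin m)) (P : B m) (Q : B (m + 1)),
        φ (Ideal.Quotient.mk (Iij m i j) P) = Ideal.Quotient.mk (L0Ideal m i j) Q →
        φ (Ideal.Quotient.mk (Iij m i j) (permB m σ P)) =
          Ideal.Quotient.mk (L0Ideal m i j) (permB (m + 1) (extPerm m (m + 1) (Nat.le_succ m) σ) Q))) ∧
    (∃ φ : (B m ⧸ Iij m (i - 1) j) →ₗ[ℂ] SQ (m + 1) (LkIdeal m i j k) (LkIdeal m i j (k + 1)),
      (∀ P : B m, φ (Ideal.Quotient.mk (Iij m (i - 1) j) P) =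
        sqMk (m + 1) (LkIdeal m i j k) (LkIdeal m i j (k + 1))
          (xv (m + 1) (Fin.last m) ^ k * inclB m (m + 1) (Nat.le_succ m) P)
          (Ideal.mul_mem_right _ _ (Ideal.mem_sup_right (Ideal.subset_span (by simp))))) ∧
      Function.Surjective φ ∧
      (∀ (σ : Equiv.Perm (Fin m)) (P : B m) (p : B (m + 1)) (hp : p ∈ LkIdeal m i j k)
        (hq : permB (m + 1) (extPerm m (m + 1) (Nat.le_succ m) σ) p ∈ LkIdeal m i j k),
        φ (Ideal.Quotient.mk (Iij m (i - 1) j) P) =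
          sqMk (m + 1) (LkIdeal m i j k) (LkIdeal m i j (k + 1)) p hp →
        φ (Ideal.Quotient.mk (Iij m (i - 1) j) (permB m σ P)) =
          sqMk (m + 1) (LkIdeal m i j k) (LkIdeal m i j (k + 1))
            (permB (m + 1) (extPerm m (m + 1) (Nat.le_succ m) σ) p) hq)) ∧
    (∃ φ : (B m ⧸ Iij m i (j - 1)) →ₗ[ℂ] SQ (m + 1) (MyIdeal m i j k') (MyIdeal m i j (k' + 1)),
      (∀ P : B m, φ (Ideal.Quotient.mk (Iij m i (j - 1)) P) =
        sqMk (m + 1) (MyIdeal m i j k') (MyIdeal m i j (k' + 1))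
          (yv (m + 1) (Fin.last m) ^ k' * inclB m (m + 1) (Nat.le_succ m) P)
          (Ideal.mul_mem_right _ _ (Ideal.mem_sup_right (Ideal.subset_span rfl)))) ∧
      Function.Surjective φ ∧
      (∀ (σ : Equiv.Perm (Fin m)) (P : B m) (p : B (m + 1)) (hp : p ∈ MyIdeal m i j k')
        (hq : permB (m + 1) (extPerm m (m + 1) (Nat.le_succ m) σ) p ∈ MyIdeal m i j k'),
        φ (Ideal.Quotient.mk (Iij m i (j - 1)) P) =
          sqMk (m + 1) (MyIdeal m i j k') (MyIdeal m i j (k' + 1)) p hp →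
        φ (Ideal.Quotient.mk (Iij m i (j - 1)) (permB m σ P)) =
          sqMk (m + 1) (MyIdeal m i j k') (MyIdeal m i j (k' + 1))
            (permB (m + 1) (extPerm m (m + 1) (Nat.le_succ m) σ) p) hq)) := by
  refine ⟨?_, ?_, ?_⟩
  -- φ₀
  · set F : B m →ₐ[ℂ] B (m + 1) ⧸ L0Ideal m i j :=
      (Ideal.Quotient.mkₐ ℂ (L0Ideal m i j)).comp (inclB m (m + 1) (Nat.le_succ m)) with hF
    have hker : ∀ a ∈ Iij m i j, F a = 0 := fun a ha => by
      rw [hF, AlgHom.comp_apply, Ideal.Quotient.mkₐ_eq_mk, Ideal.Quotient.eq_zero_iff_mem]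
      exact incl_Iij_mem_L0 m ha
    set φ := (Ideal.Quotient.liftₐ (Iij m i j) F hker).toLinearMap with hφ
    have hprop : ∀ P : B m, φ (Ideal.Quotient.mk (Iij m i j) P) =
        Ideal.Quotient.mk (L0Ideal m i j) (inclB m (m + 1) (Nat.le_succ m) P) := by
      intro P
      rw [hφ, AlgHom.toLinearMap_apply, Ideal.Quotient.liftₐ_apply]
      rfl
    refine ⟨φ, hprop, ?_, ?_⟩
    · intro q
      obtain ⟨Q, rfl⟩ := Ideal.Quotient.mk_surjective q
      refine ⟨Ideal.Quotient.mk (Iij m i j) (retr m Q), ?_⟩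
      rw [hprop, Ideal.Quotient.eq]
      have := Submodule.neg_mem (L0Ideal m i j) (Ideal.mem_sup_right (retr_approx Q))
      rwa [neg_sub] at this
    · intro σ P Q hPQ
      rw [hprop] at hPQ
      rw [hprop, inclB_permB]
      rw [Ideal.Quotient.eq] at hPQ ⊢
      have := permB_L0Ideal σ hPQ
      rwa [map_sub] at this
  · set K := LkIdeal m i j k with hK
    set K' := LkIdeal m i j (k + 1) with hK'
    have hxk : ∀ P : B m, xv (m + 1) (Fin.last m) ^ k * inclB m (m + 1) (Nat.le_succ m) P ∈
        K.restrictScalars ℂ := fun P =>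
      Ideal.mul_mem_right _ _ (Ideal.mem_sup_right (Ideal.subset_span (Or.inl rfl)))
    set f : B m →ₗ[ℂ] B (m + 1) :=
      (LinearMap.mulLeft ℂ (xv (m + 1) (Fin.last m) ^ k)).comp
        (inclB m (m + 1) (Nat.le_succ m)).toLinearMap with hf
    set g : B m →ₗ[ℂ] SQ (m + 1) K K' :=
      (Submodule.mkQ _).comp (LinearMap.codRestrict (K.restrictScalars ℂ) f hxk) with hg
    have hker : (Iij m (i - 1) j).restrictScalars ℂ ≤ LinearMap.ker g := by
      intro P hP
      rw [LinearMap.mem_ker, hg, LinearMap.comp_apply, Submodule.mkQ_apply,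
        Submodule.Quotient.mk_eq_zero]
      simpa [Submodule.mem_comap, hf] using xk_incl_Iij_mem m hi hk1 hP
    set φ := (Submodule.liftQ _ g hker).comp
      ((Submodule.Quotient.restrictScalarsEquiv ℂ (Iij m (i - 1) j)).symm.toLinearMap) with hφ
    have hprop : ∀ P : B m, φ (Ideal.Quotient.mk (Iij m (i - 1) j) P) =
        sqMk (m + 1) K K'
          (xv (m + 1) (Fin.last m) ^ k * inclB m (m + 1) (Nat.le_succ m) P) (hxk P) := by
      intro P
      rw [hφ, LinearMap.comp_apply, LinearEquiv.coe_toLinearMap,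
        ← Ideal.Quotient.mk_eq_mk, Submodule.Quotient.restrictScalarsEquiv_symm_mk,
        Submodule.liftQ_apply]
      rfl
    have hsq : ∀ (p : B (m + 1)) (hp : p ∈ K),
        Submodule.Quotient.mk (⟨p, hp⟩ : ↥(K.restrictScalars ℂ)) = sqMk (m + 1) K K' p hp :=
      fun _ _ => rfl
    refine ⟨φ, fun P => hprop P, ?_, ?_⟩
    · intro q
      obtain ⟨⟨p, hp⟩, rfl⟩ := Submodule.Quotient.mk_surjective _ q
      obtain ⟨u, hu, v, hv, heq⟩ := Submodule.mem_sup.mp hp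
      obtain ⟨a, b, hab⟩ := Ideal.mem_span_pair.mp hv
      refine ⟨Ideal.Quotient.mk (Iij m (i - 1) j) (retr m a), ?_⟩
      rw [hprop, hsq p hp]; refine (sqMk_eq_iff _ _).mpr ?_
      have h1 : xv (m + 1) (Fin.last m) ^ k * inclB m (m + 1) (Nat.le_succ m) (retr m a) - p =
          -(a * xv (m + 1) (Fin.last m) ^ k -
            xv (m + 1) (Fin.last m) ^ k * inclB m (m + 1) (Nat.le_succ m) (retr m a)) - u -
            b * yv (m + 1) (Fin.last m) := by
        rw [← heq, ← hab]; ring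
      rw [h1]
      refine Submodule.sub_mem _ (Submodule.sub_mem _
        (Submodule.neg_mem _ (Ideal.mem_sup_right (approx_x m hk1 a)))
        (Ideal.mem_sup_left hu)) (Ideal.mem_sup_right ?_)
      exact Ideal.mem_span_pair.mpr ⟨0, b, by rw [zero_mul, zero_add]⟩
    · intro σ P p hp hq h
      rw [hprop] at h; replace h := (sqMk_eq_iff _ _).mp h
      rw [hprop]; refine (sqMk_eq_iff _ _).mpr ?_
      have h2 := permB_LkIdeal σ h
      rwa [map_sub, map_mul, map_pow, extPerm_xv_last, ← inclB_permB] at h2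
  · set K := MyIdeal m i j k' with hK
    set K' := MyIdeal m i j (k' + 1) with hK'
    have hyk : ∀ P : B m, yv (m + 1) (Fin.last m) ^ k' * inclB m (m + 1) (Nat.le_succ m) P ∈
        K.restrictScalars ℂ := fun P =>
      Ideal.mul_mem_right _ _ (Ideal.mem_sup_right (Ideal.subset_span rfl))
    set f : B m →ₗ[ℂ] B (m + 1) :=
      (LinearMap.mulLeft ℂ (yv (m + 1) (Fin.last m) ^ k')).comp
        (inclB m (m + 1) (Nat.le_succ m)).toLinearMap with hf
    set g : B m →ₗ[ℂ] SQ (m + 1) K K' :=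
      (Submodule.mkQ _).comp (LinearMap.codRestrict (K.restrictScalars ℂ) f hyk) with hg
    have hker : (Iij m i (j - 1)).restrictScalars ℂ ≤ LinearMap.ker g := by
      intro P hP
      rw [LinearMap.mem_ker, hg, LinearMap.comp_apply, Submodule.mkQ_apply,
        Submodule.Quotient.mk_eq_zero]
      simpa [Submodule.mem_comap, hf] using yk_incl_Iij_mem m hj hk'1 hP
    set φ := (Submodule.liftQ _ g hker).comp
      ((Submodule.Quotient.restrictScalarsEquiv ℂ (Iij m i (j - 1))).symm.toLinearMap) with hφ
    have hprop : ∀ P : B m, φ (Ideal.Quotient.mk (Iij m i (j - 1)) P) =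
        sqMk (m + 1) K K'
          (yv (m + 1) (Fin.last m) ^ k' * inclB m (m + 1) (Nat.le_succ m) P) (hyk P) := by
      intro P
      rw [hφ, LinearMap.comp_apply, LinearEquiv.coe_toLinearMap,
        ← Ideal.Quotient.mk_eq_mk, Submodule.Quotient.restrictScalarsEquiv_symm_mk,
        Submodule.liftQ_apply]
      rfl
    have hsq : ∀ (p : B (m + 1)) (hp : p ∈ K),
        Submodule.Quotient.mk (⟨p, hp⟩ : ↥(K.restrictScalars ℂ)) = sqMk (m + 1) K K' p hp :=
      fun _ _ => rfl
    refine ⟨φ, fun P => hprop P, ?_, ?_⟩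
    · intro q
      obtain ⟨⟨p, hp⟩, rfl⟩ := Submodule.Quotient.mk_surjective _ q
      obtain ⟨u, hu, v, hv, heq⟩ := Submodule.mem_sup.mp hp
      obtain ⟨a, hab⟩ := Ideal.mem_span_singleton'.mp hv
      refine ⟨Ideal.Quotient.mk (Iij m i (j - 1)) (retr m a), ?_⟩
      rw [hprop, hsq p hp]; refine (sqMk_eq_iff _ _).mpr ?_
      have h1 : yv (m + 1) (Fin.last m) ^ k' * inclB m (m + 1) (Nat.le_succ m) (retr m a) - p =
          -(a * yv (m + 1) (Fin.last m) ^ k' -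
            yv (m + 1) (Fin.last m) ^ k' * inclB m (m + 1) (Nat.le_succ m) (retr m a)) - u := by
        rw [← heq, ← hab]; ring
      rw [h1]
      exact Submodule.sub_mem _
        (Submodule.neg_mem _ (Ideal.mem_sup_right (approx_y m hk'1 a)))
        (Ideal.mem_sup_left hu)
    · intro σ P p hp hq h
      rw [hprop] at h; replace h := (sqMk_eq_iff _ _).mp h
      rw [hprop]; refine (sqMk_eq_iff _ _).mpr ?_
      have h2 := permB_MyIdeal σ h
      rwa [map_sub, map_mul, map_pow, extPerm_yv_last, ← inclB_permB] at h2

end
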